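/- arXiv:2312.10156 — 5 statements merged into one kernel-verified Lean document; each statement's English description precedes it below -/
import Mathlib

section
/- Let H ∈ 𝔽₂^{m×n}, s ∈ 𝔽₂^n, and d ∈ 𝔽₂^n. Define H_s = diag(H s)·H and the code space C_s = range H_s ⊆ 𝔽₂^m with radical rad C_s = C_s ∩ C_s^⊥ (standard form). If H_s d ∈ rad C_s, then s ∈ ker(H_dᵀ H_d), where H_d = diag(H d)·H. -/
open Matrix

/-- `H_s = diag(H s) · H` over `𝔽₂`. -/
def Hvec {m n : ℕ} (H : Matrix (Fin m) (Fin n) (ZMod 2)) (s : Fin n → ZMod 2) :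
    Matrix (Fin m) (Fin n) (ZMod 2) :=
  Matrix.of fun i j => H.mulVec s i * H i j

lemma zmod2_aux : ∀ a b c : ZMod 2, a * b * (a * c) = a * (b * c) := by decide

/-- If `H_s d` lies in the radical of the code space `C_s = range H_s` (with respect to the
standard form on `𝔽₂^m`), then `s ∈ ker (H_dᵀ H_d)`. -/
theorem radical_elt_gives_kernel_constraint {m n : ℕ}
    (H : Matrix (Fin m) (Fin n) (ZMod 2)) (s d : Fin n → ZMod 2)
    (hrad : (Hvec H s).mulVec d ∈ LinearMap.range (Hvec H s).mulVecLin ∧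
      ∀ w ∈ LinearMap.range (Hvec H s).mulVecLin,
        dotProduct ((Hvec H s).mulVec d) w = 0) :
    ((Hvec H d)ᵀ * Hvec H d).mulVec s = 0 := by
  obtain ⟨-, h⟩ := hrad
  funext j
  have key := h ((Hvec H s).mulVec (Pi.single j 1)) ⟨Pi.single j 1, rfl⟩
  have e1 : ∀ (a b : Fin n → ZMod 2) i, (Hvec H a).mulVec b i = H.mulVec a i * H.mulVec b i := by
    intro a b i
    simp [Hvec, Matrix.mulVec, dotProduct, Finset.mul_sum, mul_assoc]
  have e2 : ∀ i, (Hvec H s).mulVec (Pi.single j 1) i = H.mulVec s i * H i j := by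
    intro i
    simp [Hvec, Matrix.mulVec, dotProduct, Pi.single_apply, mul_comm]
  have key' : ∑ i, H.mulVec s i * (H.mulVec d i * H i j) = 0 := by
    rw [dotProduct] at key
    rw [← key]
    refine Finset.sum_congr rfl fun i _ => ?_
    rw [e1, e2, zmod2_aux]
  rw [← Matrix.mulVec_mulVec]
  show ∑ i, (Hvec H d)ᵀ j i * (Hvec H d).mulVec s i = 0
  rw [← key']
  refine Finset.sum_congr rfl fun i _ => ?_
  rw [e1]
  show H.mulVec d i * H i j * (H.mulVec d i * H.mulVec s i) = _
  rw [zmod2_aux]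
  ring
end

section
/- Let M be a uniformly random m × (m − h) matrix over 𝔽₂ and fix k ≤ m/2. The probability that the column span of M contains a nonzero vector of Hamming weight at most k is at most k · C(m,k) · 2^{−h}, where C(m,k) is the binomial coefficient. -/
open Matrix

/-- Hamming weight of a vector over `𝔽₂`. -/
def hammingWt {m : ℕ} (v : Fin m → ZMod 2) : ℕ :=
  (Finset.univ.filter fun i => v i ≠ 0).card

open Finset in
private lemma choose_mono_left {m j k : ℕ} (hjk : j ≤ k) (hk : 2 * k ≤ m) :
    m.choose j ≤ m.choose k := by
  induction k with
  | zero => simp [Nat.le_zero.mp hjk]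
  | succ k ih =>
    rcases Nat.lt_or_ge j (k + 1) with h | h
    · exact (ih (Nat.lt_succ_iff.mp h) (by omega)).trans
        (Nat.choose_le_succ_of_lt_half_left (by omega))
    · rw [le_antisymm hjk h]

open Finset in
private lemma wt_card_le {m j : ℕ} :
    ((univ.filter fun v : Fin m → ZMod 2 => hammingWt v = j)).card ≤ m.choose j := by
  classical
  have : (Finset.powersetCard j (univ : Finset (Fin m))).card = m.choose j := by
    simp [Finset.card_powersetCard]
  rw [← this]
  apply Finset.card_le_card_of_injOn (fun v => univ.filter fun i => v i ≠ 0)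
  · intro v hv
    simp only [Finset.mem_coe, mem_filter, mem_univ, true_and] at hv
    simpa [Finset.mem_coe, Finset.mem_powersetCard, hammingWt] using hv
  · intro v hv w hw hvw
    funext i
    have h01 : ∀ a : ZMod 2, a = 0 ∨ a = 1 := by decide
    have hvw' : (univ.filter fun i => v i ≠ 0) = (univ.filter fun i => w i ≠ 0) := hvw
    have : (v i ≠ 0) ↔ (w i ≠ 0) := by
      rw [Finset.ext_iff] at hvw'
      simpa using hvw' i
    rcases h01 (v i) with h | h <;> rcases h01 (w i) with h' | h' <;>
      simp_all

open Finset in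
private lemma V_card_le {m k : ℕ} (hk : 2 * k ≤ m) :
    ((univ.filter fun v : Fin m → ZMod 2 => v ≠ 0 ∧ hammingWt v ≤ k)).card
      ≤ k * m.choose k := by
  classical
  have hsub : (univ.filter fun v : Fin m → ZMod 2 => v ≠ 0 ∧ hammingWt v ≤ k)
      ⊆ (Finset.Icc 1 k).biUnion
          (fun j => univ.filter fun v : Fin m → ZMod 2 => hammingWt v = j) := by
    intro v hv
    simp only [mem_filter, mem_univ, true_and] at hv
    have h1 : 1 ≤ hammingWt v := by
      by_contra hcon
      have h0 : hammingWt v = 0 := by omega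
      apply hv.1
      funext i
      by_contra hi
      have : i ∈ univ.filter fun i => v i ≠ 0 := by simpa using hi
      rw [hammingWt, Finset.card_eq_zero] at h0
      simp [h0] at this
    simp only [Finset.mem_biUnion, Finset.mem_Icc, mem_filter, mem_univ, true_and]
    exact ⟨hammingWt v, ⟨h1, hv.2⟩, rfl⟩
  calc _ ≤ _ := Finset.card_le_card hsub
    _ ≤ ∑ j ∈ Finset.Icc 1 k, ((univ.filter fun v : Fin m → ZMod 2 =>
          hammingWt v = j)).card := Finset.card_biUnion_le
    _ ≤ ∑ j ∈ Finset.Icc 1 k, m.choose k := by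
        refine Finset.sum_le_sum fun j hj => ?_
        exact wt_card_le.trans (choose_mono_left (Finset.mem_Icc.mp hj).2 hk)
    _ = k * m.choose k := by simp [Nat.card_Icc]

open Finset in
/-- Fibers of `M ↦ M *ᵥ c` all have the same size, for fixed `c` with `c j₀ = 1`. -/
private lemma fiber_card_eq {m n : ℕ} (c : Fin n → ZMod 2) (j₀ : Fin n) (hc : c j₀ = 1)
    (v : Fin m → ZMod 2) :
    ((univ.filter fun M : Matrix (Fin m) (Fin n) (ZMod 2) => M.mulVec c = v)).card
      = ((univ.filter fun M : Matrix (Fin m) (Fin n) (ZMod 2) => M.mulVec c = 0)).card := by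
  classical
  set D : Matrix (Fin m) (Fin n) (ZMod 2) := fun i j => if j = j₀ then v i else 0 with hD
  have hDc : D.mulVec c = v := by
    funext i
    simp only [Matrix.mulVec, dotProduct, hD]
    rw [Finset.sum_eq_single j₀]
    · simp [hc]
    · intro b _ hb; simp [hb]
    · simp
  have hDD : D + D = 0 := by
    funext i j
    simp only [Matrix.add_apply, hD, Matrix.zero_apply]
    rcases (by decide : ∀ a : ZMod 2, a + a = 0) with h
    exact h _
  have key : ∀ a : ZMod 2, a + a = 0 := by decide
  apply Finset.card_bij' (fun M _ => M + D) (fun M _ => M + D)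
  · intro M hM
    simp only [mem_filter, mem_univ, true_and] at hM ⊢
    rw [Matrix.add_mulVec, hM, hDc]
    funext i; simp [key]
  · intro M hM
    simp only [mem_filter, mem_univ, true_and] at hM ⊢
    rw [Matrix.add_mulVec, hM, hDc]
    funext i; simp
  · intro M _
    rw [add_assoc, hDD, add_zero]
  · intro M _
    rw [add_assoc, hDD, add_zero]

/-- For a uniformly random `m × (m−h)` matrix `M` over `𝔽₂` and `k ≤ m/2`, the probability
that the column span of `M` contains a nonzero vector of Hamming weight at most `k`
is at most `k · C(m,k) · 2^{−h}`. -/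
theorem random_matrix_min_weight_bound {m h k : ℕ} (hhm : h ≤ m) (hk : 2 * k ≤ m) :
    (Nat.card {M : Matrix (Fin m) (Fin (m - h)) (ZMod 2) |
        ∃ v ∈ LinearMap.range M.mulVecLin, v ≠ 0 ∧ hammingWt v ≤ k} : ℝ) /
        2 ^ (m * (m - h))
      ≤ (k * m.choose k : ℝ) * (2 : ℝ)⁻¹ ^ h := by
  classical
  set n := m - h with hn
  set V : Finset (Fin m → ZMod 2) :=
    Finset.univ.filter (fun v : Fin m → ZMod 2 => v ≠ 0 ∧ hammingWt v ≤ k) with hV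
  set E : Finset (Matrix (Fin m) (Fin n) (ZMod 2)) :=
    Finset.univ.filter (fun M => ∃ v ∈ LinearMap.range M.mulVecLin, v ≠ 0 ∧ hammingWt v ≤ k)
    with hE
  -- identify Nat.card with E.card
  have hcard : Nat.card {M : Matrix (Fin m) (Fin n) (ZMod 2) |
      ∃ v ∈ LinearMap.range M.mulVecLin, v ≠ 0 ∧ hammingWt v ≤ k} = E.card := by
    rw [Nat.card_coe_set_eq, Set.ncard_eq_toFinset_card', Set.toFinset_setOf]
  -- total number of matrices
  have hMtot : (Finset.univ : Finset (Matrix (Fin m) (Fin n) (ZMod 2))).card = 2 ^ (m * n) := by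
    simp only [Finset.card_univ]
    rw [show (2 : ℕ) ^ (m * n) = (2 ^ n) ^ m by rw [← pow_mul, mul_comm]]
    show Fintype.card (Fin m → Fin n → ZMod 2) = _
    simp [Fintype.card_fun, ZMod.card]
  -- fiber sizes: for c ≠ 0, fiber0 * 2^m = 2^(m*n)
  have fiber0_mul : ∀ c : Fin n → ZMod 2, c ≠ 0 →
      ((Finset.univ.filter fun M : Matrix (Fin m) (Fin n) (ZMod 2) =>
        M.mulVec c = 0)).card * 2 ^ m = 2 ^ (m * n) := by
    intro c hc
    obtain ⟨j₀, hj₀⟩ : ∃ j₀, c j₀ = 1 := by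
      by_contra hcon
      push_neg at hcon
      apply hc
      funext j
      rcases (by decide : ∀ a : ZMod 2, a = 0 ∨ a = 1) (c j) with h | h
      · exact h
      · exact absurd h (hcon j)
    have := Finset.card_eq_sum_card_fiberwise
      (f := fun M : Matrix (Fin m) (Fin n) (ZMod 2) => M.mulVec c)
      (s := Finset.univ) (t := Finset.univ) (fun x _ => Finset.mem_univ _)
    rw [hMtot] at this
    rw [this]
    have : ∀ v : Fin m → ZMod 2,
        (Finset.univ.filter fun M : Matrix (Fin m) (Fin n) (ZMod 2) =>
          M.mulVec c = v).card
        = ((Finset.univ.filter fun M : Matrix (Fin m) (Fin n) (ZMod 2) =>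
          M.mulVec c = 0)).card := fun v => fiber_card_eq c j₀ hj₀ v
    rw [Finset.sum_congr rfl fun v _ => by
      exact this v]
    simp [Finset.card_univ, ZMod.card, mul_comm]
  -- per-c bound
  have perc : ∀ c : Fin n → ZMod 2,
      ((Finset.univ.filter fun M : Matrix (Fin m) (Fin n) (ZMod 2) =>
        M.mulVec c ∈ V)).card * 2 ^ m ≤ (k * m.choose k) * 2 ^ (m * n) := by
    intro c
    by_cases hc : c = 0
    · have : (Finset.univ.filter fun M : Matrix (Fin m) (Fin n) (ZMod 2) =>
          M.mulVec c ∈ V) = ∅ := by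
        apply Finset.filter_false_of_mem
        intro M _
        subst hc
        simp only [Matrix.mulVec_zero, hV, Finset.mem_filter]
        rintro ⟨-, h0, -⟩
        exact h0 rfl
      simp [this]
    · have hfib : ((Finset.univ.filter fun M : Matrix (Fin m) (Fin n) (ZMod 2) =>
          M.mulVec c ∈ V)).card
          = V.card * ((Finset.univ.filter fun M : Matrix (Fin m) (Fin n) (ZMod 2) =>
            M.mulVec c = 0)).card := by
        rw [Finset.card_eq_sum_card_fiberwise
          (f := fun M : Matrix (Fin m) (Fin n) (ZMod 2) => M.mulVec c)
          (s := Finset.univ.filter fun M : Matrix (Fin m) (Fin n) (ZMod 2) => M.mulVec c ∈ V)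
          (t := V) (fun M hM => (Finset.mem_filter.mp hM).2)]
        obtain ⟨j₀, hj₀⟩ : ∃ j₀, c j₀ = 1 := by
          by_contra hcon
          push_neg at hcon
          apply hc
          funext j
          rcases (by decide : ∀ a : ZMod 2, a = 0 ∨ a = 1) (c j) with h | h
          · exact h
          · exact absurd h (hcon j)
        rw [Finset.sum_congr rfl (fun v hv => ?_), Finset.sum_const, smul_eq_mul]
        have heq : ((Finset.univ.filter fun M : Matrix (Fin m) (Fin n) (ZMod 2) =>
            M.mulVec c ∈ V).filter fun M => M.mulVec c = v)
            = Finset.univ.filter fun M : Matrix (Fin m) (Fin n) (ZMod 2) =>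
              M.mulVec c = v := by
          ext M
          simp only [Finset.mem_filter, Finset.mem_univ, true_and]
          constructor
          · rintro ⟨-, h⟩; exact h
          · intro hMv; exact ⟨hMv ▸ hv, hMv⟩
        rw [heq, fiber_card_eq c j₀ hj₀ v]
      rw [hfib, mul_assoc, fiber0_mul c hc]
      exact Nat.mul_le_mul_right _ (V_card_le hk)
  -- union bound
  have hEsub : E ⊆ Finset.univ.biUnion (fun c : Fin n → ZMod 2 =>
      Finset.univ.filter fun M : Matrix (Fin m) (Fin n) (ZMod 2) => M.mulVec c ∈ V) := by
    intro M hM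
    simp only [hE, Finset.mem_filter, Finset.mem_univ, true_and] at hM
    obtain ⟨v, hvr, hv0, hvk⟩ := hM
    obtain ⟨c, hc⟩ := hvr
    refine Finset.mem_biUnion.mpr ⟨c, Finset.mem_univ _, ?_⟩
    simp only [Finset.mem_filter, Finset.mem_univ, true_and, hV]
    rw [show M.mulVec c = v from by rw [← hc]; rfl]
    exact ⟨hv0, hvk⟩
  have hEbound : E.card * 2 ^ m ≤ 2 ^ n * ((k * m.choose k) * 2 ^ (m * n)) := by
    calc E.card * 2 ^ m
        ≤ (Finset.univ.biUnion (fun c : Fin n → ZMod 2 =>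
          Finset.univ.filter fun M : Matrix (Fin m) (Fin n) (ZMod 2) =>
            M.mulVec c ∈ V)).card * 2 ^ m :=
          Nat.mul_le_mul_right _ (Finset.card_le_card hEsub)
      _ ≤ (∑ c : Fin n → ZMod 2,
          ((Finset.univ.filter fun M : Matrix (Fin m) (Fin n) (ZMod 2) =>
            M.mulVec c ∈ V)).card) * 2 ^ m :=
          Nat.mul_le_mul_right _ Finset.card_biUnion_le
      _ = ∑ c : Fin n → ZMod 2,
          ((Finset.univ.filter fun M : Matrix (Fin m) (Fin n) (ZMod 2) =>
            M.mulVec c ∈ V)).card * 2 ^ m := by rw [Finset.sum_mul]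
      _ ≤ ∑ _c : Fin n → ZMod 2, (k * m.choose k) * 2 ^ (m * n) :=
          Finset.sum_le_sum fun c _ => perc c
      _ = 2 ^ n * ((k * m.choose k) * 2 ^ (m * n)) := by
          simp [Finset.card_univ, ZMod.card]
  -- conclude in ℝ
  rw [hcard]
  have h2mn : (0 : ℝ) < 2 ^ (m * n) := by positivity
  rw [div_le_iff₀ h2mn]
  have hreal : (E.card : ℝ) * 2 ^ m ≤ 2 ^ n * ((k * m.choose k) * 2 ^ (m * n)) := by
    have := hEbound
    exact_mod_cast this
  have hpow : (2 : ℝ) ^ m = 2 ^ n * 2 ^ h := by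
    rw [← pow_add]
    congr 1
    omega
  have hinv : (2 : ℝ)⁻¹ ^ h * 2 ^ h = 1 := by
    rw [← mul_pow]
    simp
  -- from hreal: E.card * 2^n * 2^h ≤ 2^n * (kC * 2^(mn))
  rw [hpow, ← mul_assoc] at hreal
  have h2n : (0 : ℝ) < 2 ^ n := by positivity
  have hreal2 : (E.card : ℝ) * 2 ^ h ≤ (k * m.choose k) * 2 ^ (m * n) := by
    have := mul_le_mul_of_nonneg_left hreal (le_of_lt (inv_pos.mpr h2n))
    calc (E.card : ℝ) * 2 ^ h
        = (2 ^ n)⁻¹ * ((E.card : ℝ) * 2 ^ n * 2 ^ h) := by field_simp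
      _ ≤ (2 ^ n)⁻¹ * (2 ^ n * ((k * m.choose k) * 2 ^ (m * n))) := this
      _ = (k * m.choose k) * 2 ^ (m * n) := by field_simp
  calc (E.card : ℝ)
      = (E.card : ℝ) * 2 ^ h * ((2 : ℝ)⁻¹ ^ h) := by
        rw [mul_assoc, mul_comm ((2:ℝ)^h), hinv, mul_one]
    _ ≤ (k * m.choose k) * 2 ^ (m * n) * ((2 : ℝ)⁻¹ ^ h) := by
        apply mul_le_mul_of_nonneg_right hreal2
        positivity
    _ = (k * m.choose k) * (2 : ℝ)⁻¹ ^ h * 2 ^ (m * n) := by ring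
end

section
/- Let H = [[F, D, 0],[A, B, C]] be a block matrix over 𝔽₂ with Dᵀ D = 0 and Dᵀ F = 0. Then every vector of the form (0, b, 0) ∈ 𝔽₂^g ⊕ 𝔽₂^d ⊕ 𝔽₂^{n−g−d} with b ∈ ker B satisfies H (0,b,0) = (D b, 0) and this image lies in the radical of range(F|D) (embedded in the first m₁ coordinates); consequently dim(rad range(F|D) ∩ H(ker Hᵀ H)) ≥ dim(D(ker B)). -/
open Matrix

/-- Orthogonal complement of a subspace of `𝔽₂^ι` with respect to the standard bilinear form. -/
def dualOrth {ι : Type*} [Fintype ι] (W : Submodule (ZMod 2) (ι → ZMod 2)) :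
    Submodule (ZMod 2) (ι → ZMod 2) where
  carrier := {x | ∀ w ∈ W, dotProduct x w = 0}
  add_mem' := by
    intro x y hx hy w hw
    simp [add_dotProduct, hx w hw, hy w hw]
  zero_mem' := by
    intro w hw
    simp
  smul_mem' := by
    intro c x hx w hw
    simp [smul_dotProduct, hx w hw]

/-- Embedding of `𝔽₂^{m₁}` into the first `m₁` coordinates of `𝔽₂^{m₁} ⊕ 𝔽₂^{m₂}`. -/
def padL (m₁ m₂ : ℕ) : (Fin m₁ → ZMod 2) →ₗ[ZMod 2] (Fin m₁ ⊕ Fin m₂ → ZMod 2) where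
  toFun v := Sum.elim v 0
  map_add' x y := by funext r; cases r <;> simp
  map_smul' c x := by funext r; cases r <;> simp

lemma padL_injective (m₁ m₂ : ℕ) : Function.Injective (padL m₁ m₂) := by
  intro x y hxy
  funext i
  have := congrFun hxy (Sum.inl i)
  simpa [padL] using this

/-- For `H = [[F, D, 0], [A, B, C]]` over `𝔽₂` with `Dᵀ D = 0` and `Dᵀ F = 0`:
every `(0, b, 0)` with `b ∈ ker B` satisfies `H (0,b,0) = (D b, 0)`, this image lies in
the radical of `range (F|D)` (embedded in the first `m₁` coordinates), and consequently
`dim (rad range (F|D) ∩ H (ker Hᵀ H)) ≥ dim (D (ker B))`. -/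
theorem kernel_B_gives_radical_elements {m₁ m₂ g d c : ℕ}
    (F : Matrix (Fin m₁) (Fin g) (ZMod 2)) (D : Matrix (Fin m₁) (Fin d) (ZMod 2))
    (A : Matrix (Fin m₂) (Fin g) (ZMod 2)) (B : Matrix (Fin m₂) (Fin d) (ZMod 2))
    (C : Matrix (Fin m₂) (Fin c) (ZMod 2))
    (hDD : Dᵀ * D = 0) (hDF : Dᵀ * F = 0)
    (H : Matrix (Fin m₁ ⊕ Fin m₂) (Fin g ⊕ (Fin d ⊕ Fin c)) (ZMod 2))
    (hH : H = Matrix.of (Sum.elim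
      (fun i => Sum.elim (F i) (Sum.elim (D i) (fun _ => 0)))
      (fun i => Sum.elim (A i) (Sum.elim (B i) (C i)))))
    (FD : Matrix (Fin m₁) (Fin g ⊕ Fin d) (ZMod 2))
    (hFD : FD = Matrix.of (fun i => Sum.elim (F i) (D i))) :
    (∀ b : Fin d → ZMod 2, B.mulVec b = 0 →
      (H.mulVec (Sum.elim (fun _ => 0) (Sum.elim b (fun _ => 0))) =
          Sum.elim (D.mulVec b) 0 ∧
        D.mulVec b ∈ LinearMap.range FD.mulVecLin ∧
        ∀ w ∈ LinearMap.range FD.mulVecLin,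
          dotProduct (D.mulVec b) w = 0)) ∧
    Module.finrank (ZMod 2)
        ↥(Submodule.map D.mulVecLin (LinearMap.ker B.mulVecLin)) ≤
      Module.finrank (ZMod 2)
        ↥(Submodule.map (padL m₁ m₂)
            (LinearMap.range FD.mulVecLin ⊓ dualOrth (LinearMap.range FD.mulVecLin)) ⊓
          Submodule.map H.mulVecLin (LinearMap.ker (Hᵀ * H).mulVecLin)) := by
  -- basic computation of FD.mulVec on split vectors
  have hFDmul : ∀ (x : Fin g → ZMod 2) (y : Fin d → ZMod 2),
      FD.mulVec (Sum.elim x y) = F.mulVec x + D.mulVec y := by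
    intro x y
    funext i
    simp [hFD, Matrix.mulVec, dotProduct, Fintype.sum_sum_type, Pi.add_apply]
  -- D.mulVec b is in range FD
  have hrange : ∀ b : Fin d → ZMod 2, D.mulVec b ∈ LinearMap.range FD.mulVecLin := by
    intro b
    exact ⟨Sum.elim 0 b, by simp [Matrix.mulVecLin_apply, hFDmul]⟩
  have hFtD : Fᵀ * D = 0 := by
    have := congrArg Matrix.transpose hDF
    simpa [Matrix.transpose_mul] using this
  -- D.mulVec b is orthogonal to range FD
  have hdot : ∀ (n : ℕ) (M : Matrix (Fin m₁) (Fin n) (ZMod 2)) (u : Fin n → ZMod 2)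
      (b : Fin d → ZMod 2), dotProduct (M.mulVec u) (D.mulVec b) =
        dotProduct u ((Mᵀ * D).mulVec b) := by
    intro n M u b
    rw [dotProduct_comm, Matrix.dotProduct_mulVec, ← Matrix.mulVec_transpose,
      Matrix.mulVec_mulVec, dotProduct_comm]
  have horth : ∀ (b : Fin d → ZMod 2), ∀ w ∈ LinearMap.range FD.mulVecLin,
      dotProduct (D.mulVec b) w = 0 := by
    intro b w hw
    obtain ⟨x, rfl⟩ := hw
    rw [Matrix.mulVecLin_apply, ← Sum.elim_comp_inl_inr x, hFDmul]
    rw [dotProduct_comm, add_dotProduct, hdot, hdot, hFtD, hDD]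
    simp
  -- H applied to (0, b, 0)
  have hHmul : ∀ b : Fin d → ZMod 2, B.mulVec b = 0 →
      H.mulVec (Sum.elim (fun _ => 0) (Sum.elim b (fun _ => 0))) =
        Sum.elim (D.mulVec b) 0 := by
    intro b hb
    funext i
    rcases i with i | i
    · simp [hH, Matrix.mulVec, dotProduct, Fintype.sum_sum_type]
    · have := congrFun hb i
      simpa [hH, Matrix.mulVec, dotProduct, Fintype.sum_sum_type] using this
  -- Hᵀ kills Sum.elim (D.mulVec b) 0
  have hHT : ∀ b : Fin d → ZMod 2,
      Hᵀ.mulVec (Sum.elim (D.mulVec b) 0) = 0 := by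
    intro b
    funext j
    rcases j with k | k | k
    · have h : (Hᵀ.mulVec (Sum.elim (D.mulVec b) 0)) (Sum.inl k) =
          (Fᵀ.mulVec (D.mulVec b)) k := by
        simp [hH, Matrix.mulVec, dotProduct, Fintype.sum_sum_type,
          Matrix.transpose_apply]
      rw [h, Matrix.mulVec_mulVec, hFtD]
      simp
    · have h : (Hᵀ.mulVec (Sum.elim (D.mulVec b) 0)) (Sum.inr (Sum.inl k)) =
          (Dᵀ.mulVec (D.mulVec b)) k := by
        simp [hH, Matrix.mulVec, dotProduct, Fintype.sum_sum_type,
          Matrix.transpose_apply]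
      rw [h, Matrix.mulVec_mulVec, hDD]
      simp
    · simp [hH, Matrix.mulVec, dotProduct, Fintype.sum_sum_type,
        Matrix.transpose_apply]
  refine ⟨fun b hb => ⟨hHmul b hb, hrange b, horth b⟩, ?_⟩
  -- the inequality
  set W := Submodule.map (padL m₁ m₂)
      (LinearMap.range FD.mulVecLin ⊓ dualOrth (LinearMap.range FD.mulVecLin)) ⊓
    Submodule.map H.mulVecLin (LinearMap.ker (Hᵀ * H).mulVecLin) with hW
  have hle : Submodule.map (padL m₁ m₂)
      (Submodule.map D.mulVecLin (LinearMap.ker B.mulVecLin)) ≤ W := by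
    rintro _ ⟨_, ⟨b, hb, rfl⟩, rfl⟩
    have hb' : B.mulVec b = 0 := hb
    constructor
    · exact ⟨D.mulVec b, ⟨hrange b, horth b⟩, rfl⟩
    · refine ⟨Sum.elim (fun _ => 0) (Sum.elim b (fun _ => 0)), ?_, ?_⟩
      · show (Hᵀ * H).mulVec _ = 0
        rw [← Matrix.mulVec_mulVec, hHmul b hb', hHT b]
      · show H.mulVec _ = _
        rw [hHmul b hb']
        rfl
  calc Module.finrank (ZMod 2)
        ↥(Submodule.map D.mulVecLin (LinearMap.ker B.mulVecLin))
      = Module.finrank (ZMod 2) ↥(Submodule.map (padL m₁ m₂)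
          (Submodule.map D.mulVecLin (LinearMap.ker B.mulVecLin))) := by
        exact (LinearEquiv.finrank_eq
          (Submodule.equivMapOfInjective _ (padL_injective m₁ m₂) _))
    _ ≤ Module.finrank (ZMod 2) ↥W := Submodule.finrank_mono hle
end

section
/- Let H ∈ 𝔽₂^{m×n}, let s ∈ 𝔽₂^n, H_s = diag(H s)·H, C_s = range H_s, and suppose d¹, …, dᵏ ∈ 𝔽₂^n are drawn independently and uniformly at random. If H_s is surjective onto C_s and rad C_s has codimension g in C_s, then Pr[s ∈ ∩_{i=1}^{k} ker(H_{dⁱ}ᵀ H_{dⁱ})] ≥ Pr[∀ i: H_s dⁱ ∈ rad C_s] = (2^{−g})^k = 2^{−gk}. -/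
open Matrix

lemma hvec_mulVec {m n : ℕ} (H : Matrix (Fin m) (Fin n) (ZMod 2)) (a b : Fin n → ZMod 2) (i : Fin m) :
    (Hvec H a).mulVec b i = H.mulVec a i * H.mulVec b i := by
  simp [Hvec, Matrix.mulVec, dotProduct, Finset.mul_sum, mul_assoc]

lemma key_incl {m n : ℕ} (H : Matrix (Fin m) (Fin n) (ZMod 2)) (s : Fin n → ZMod 2)
    (d : Fin n → ZMod 2)
    (hd : (Hvec H s).mulVec d ∈ LinearMap.range (Hvec H s).mulVecLin ⊓
      dualOrth (LinearMap.range (Hvec H s).mulVecLin)) :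
    ((Hvec H d)ᵀ * Hvec H d).mulVec s = 0 := by
  obtain ⟨-, hv2⟩ := hd
  set v := (Hvec H s).mulVec d with hv
  rw [← Matrix.mulVec_mulVec]
  have hsym : (Hvec H d).mulVec s = v := by
    funext i; rw [hvec_mulVec, hv, hvec_mulVec, mul_comm]
  rw [hsym]
  funext j
  have hw : ((Hvec H s).mulVec (Pi.single j 1)) ∈ LinearMap.range (Hvec H s).mulVecLin :=
    ⟨Pi.single j 1, by simp [Matrix.mulVecLin_apply]⟩
  have h0 := hv2 _ hw
  have hfact : ∀ a b c : ZMod 2, (a * c) * (b * a) = (b * a) * (b * c) := by decide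
  rw [Pi.zero_apply, ← h0]
  simp only [Matrix.mulVec, dotProduct, Matrix.transpose_apply, Hvec, Matrix.of_apply]
  apply Finset.sum_congr rfl
  intro i _
  have hvi : v i = H.mulVec s i * H.mulVec d i := hvec_mulVec H s d i
  have hwi : (Hvec H s).mulVec (Pi.single j 1) i = H.mulVec s i * H i j := by
    rw [hvec_mulVec]
    congr 1
    simp [Matrix.mulVec_single]
  calc H.mulVec d i * H i j * v i
      = (H.mulVec d i * H i j) * (H.mulVec s i * H.mulVec d i) := by rw [hvi]
    _ = (H.mulVec s i * H.mulVec d i) * (H.mulVec s i * H i j) := hfact _ _ _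
    _ = v i * (Hvec H s).mulVec (Pi.single j 1) i := by rw [hvi, hwi]

set_option synthInstance.maxHeartbeats 1000000 in
/-- For iid uniform `d¹, …, dᵏ ∈ 𝔽₂^n`: the probability that
`s ∈ ∩ᵢ ker (H_{dⁱ}ᵀ H_{dⁱ})` is at least the probability that all `H_s dⁱ` lie in the
radical of `C_s = range H_s`, and the latter equals `2^{−gk}` when the radical has
codimension `g` in `C_s` (here counting tuples: `#{good tuples} · 2^{gk} = 2^{nk}`). -/
theorem double_meyer_success_probability {m n g k : ℕ}
    (H : Matrix (Fin m) (Fin n) (ZMod 2)) (s : Fin n → ZMod 2)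
    (rad : Submodule (ZMod 2) (Fin m → ZMod 2))
    (hrad : rad = LinearMap.range (Hvec H s).mulVecLin ⊓
      dualOrth (LinearMap.range (Hvec H s).mulVecLin))
    (hg : Module.finrank (ZMod 2) rad + g =
      Module.finrank (ZMod 2) (LinearMap.range (Hvec H s).mulVecLin)) :
    Nat.card {t : Fin k → (Fin n → ZMod 2) |
        ∀ i, (Hvec H s).mulVec (t i) ∈ rad}
      ≤ Nat.card {t : Fin k → (Fin n → ZMod 2) |
        ∀ i, ((Hvec H (t i))ᵀ * Hvec H (t i)).mulVec s = 0} ∧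
    Nat.card {t : Fin k → (Fin n → ZMod 2) |
        ∀ i, (Hvec H s).mulVec (t i) ∈ rad} * 2 ^ (g * k) = 2 ^ (n * k) := by
  set f := (Hvec H s).mulVecLin with hf
  constructor
  · apply Nat.card_mono (Set.toFinite _)
    intro t ht i
    apply key_incl H s (t i)
    rw [← hrad]
    exact ht i
  · -- counting
    set W := Submodule.comap f rad with hW
    have hradle : rad ≤ LinearMap.range f := hrad ▸ inf_le_left
    -- single-coordinate set equals W
    have hset : {d : Fin n → ZMod 2 | (Hvec H s).mulVec d ∈ rad} = (W : Set (Fin n → ZMod 2)) := by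
      ext d
      simp [hW, Submodule.mem_comap, hf, Matrix.mulVecLin_apply]
    -- tuple count
    have htup : Nat.card {t : Fin k → (Fin n → ZMod 2) |
        ∀ i, (Hvec H s).mulVec (t i) ∈ rad} = Nat.card W ^ k := by
      have e : {t : Fin k → (Fin n → ZMod 2) | ∀ i, (Hvec H s).mulVec (t i) ∈ rad} ≃
          (Fin k → W) := by
        refine (Equiv.subtypePiEquivPi (p := fun _ d => (Hvec H s).mulVec d ∈ rad)).trans ?_
        refine Equiv.piCongrRight fun i => Equiv.setCongr ?_
        exact hset
      rw [Nat.card_congr e, Nat.card_pi, Finset.prod_const, Finset.card_univ, Fintype.card_fin]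
    -- finrank of W
    have hkerle : LinearMap.ker f ≤ W := by
      intro x hx
      simp only [hW, Submodule.mem_comap]
      rw [LinearMap.mem_ker.mp hx]
      exact rad.zero_mem
    have hWrank : Module.finrank (ZMod 2) W =
        Module.finrank (ZMod 2) rad + Module.finrank (ZMod 2) (LinearMap.ker f) := by
      have h1 := LinearMap.finrank_range_add_finrank_ker (f.domRestrict W)
      have hr : LinearMap.range (f.domRestrict W) = rad := by
        rw [LinearMap.range_domRestrict, hW, Submodule.map_comap_eq]
        exact inf_eq_right.mpr hradle
      have hk : Module.finrank (ZMod 2) (LinearMap.ker (f.domRestrict W)) =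
          Module.finrank (ZMod 2) (LinearMap.ker f) := by
        rw [LinearMap.ker_domRestrict]
        exact (Submodule.comapSubtypeEquivOfLe hkerle).finrank_eq
      have h2 : Module.finrank (ZMod 2) W =
          Module.finrank (ZMod 2) (LinearMap.range (f.domRestrict W)) +
          Module.finrank (ZMod 2) (LinearMap.ker (f.domRestrict W)) := by
        rw [h1]
      rw [h2, hr, hk]
    have hrn := LinearMap.finrank_range_add_finrank_ker f
    rw [Module.finrank_pi, Fintype.card_fin] at hrn
    have hdim : Module.finrank (ZMod 2) W + g = n := by
      rw [hWrank, add_right_comm, hg, hrn]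
    -- cardinality of W
    letI : Fintype W := Fintype.ofFinite W
    have hcardW : Nat.card W = 2 ^ Module.finrank (ZMod 2) W := by
      rw [Nat.card_eq_fintype_card, Module.card_eq_pow_finrank (K := ZMod 2), ZMod.card]
    rw [htup, hcardW, ← pow_mul, ← pow_add, ← add_mul, hdim]
end

section
/- Let H ∈ 𝔽₂^{m×n} have block form [[F, D, 0],[A, B, C]] with range D ⊆ rad(range(F|D)) and supp(range D) = [m₁] (the range of D has full support on the first m₁ coordinates). If i ∈ [m₁] is such that there exists d ∈ 𝔽₂^n with H d = eⁱ (i is a 'singleton'), we get a contradiction; hence every singleton index i (i.e., eⁱ ∈ range H) satisfies i > m₁. -/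
open Matrix

/-- For `H = [[F, D, 0], [A, B, C]]` over `𝔽₂` with `range D ⊆ rad (range (F|D))` and
`supp (range D) = [m₁]`, no standard basis vector `eⁱ` with `i ≤ m₁` lies in `range H`:
every singleton index lies among the redundant rows. -/
theorem no_singleton_in_secret_rows {m₁ m₂ g d c : ℕ}
    (F : Matrix (Fin m₁) (Fin g) (ZMod 2)) (D : Matrix (Fin m₁) (Fin d) (ZMod 2))
    (A : Matrix (Fin m₂) (Fin g) (ZMod 2)) (B : Matrix (Fin m₂) (Fin d) (ZMod 2))
    (C : Matrix (Fin m₂) (Fin c) (ZMod 2))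
    (H : Matrix (Fin m₁ ⊕ Fin m₂) (Fin g ⊕ (Fin d ⊕ Fin c)) (ZMod 2))
    (hH : H = Matrix.of (Sum.elim
      (fun i => Sum.elim (F i) (Sum.elim (D i) (fun _ => 0)))
      (fun i => Sum.elim (A i) (Sum.elim (B i) (C i)))))
    (FD : Matrix (Fin m₁) (Fin g ⊕ Fin d) (ZMod 2))
    (hFD : FD = Matrix.of (fun i => Sum.elim (F i) (D i)))
    (hDrad : ∀ v ∈ LinearMap.range D.mulVecLin,
      v ∈ LinearMap.range FD.mulVecLin ∧
        ∀ w ∈ LinearMap.range FD.mulVecLin, dotProduct v w = 0)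
    (hsupp : ∀ j : Fin m₁, ∃ v ∈ LinearMap.range D.mulVecLin, v j ≠ 0) :
    ∀ i : Fin m₁, ¬ ∃ x : (Fin g ⊕ (Fin d ⊕ Fin c)) → ZMod 2,
      H.mulVec x = Pi.single (Sum.inl i) 1 := by
  rintro i ⟨x, hx⟩
  set y : (Fin g ⊕ Fin d) → ZMod 2 :=
    Sum.elim (fun k => x (Sum.inl k)) (fun k => x (Sum.inr (Sum.inl k))) with hy
  have key : FD.mulVec y = Pi.single i 1 := by
    funext j
    have h1 := congrFun hx (Sum.inl j)
    have h2 : (Pi.single (Sum.inl i : Fin m₁ ⊕ Fin m₂) (1 : ZMod 2) : Fin m₁ ⊕ Fin m₂ → ZMod 2) (Sum.inl j)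
        = (Pi.single i (1 : ZMod 2) : Fin m₁ → ZMod 2) j := by
      simp only [Pi.single_apply, Sum.inl.injEq]
    rw [← h2, ← h1]
    simp [hH, hFD, Matrix.mulVec, dotProduct, Fintype.sum_sum_type, hy]
  have hrange : Pi.single i (1 : ZMod 2) ∈ LinearMap.range FD.mulVecLin :=
    ⟨y, by simpa using key⟩
  obtain ⟨v, hv, hvi⟩ := hsupp i
  have := (hDrad v hv).2 _ hrange
  rw [dotProduct_single] at this
  exact hvi (by simpa using this)
end
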